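/- Let A = K[x,y,z] be ℤ-graded with deg x = a, deg y = b, deg z = -c where a,b,c > 0, and let E = {φ graded automorphism : φ(z) = z} and T = {φ_λ : λ ∈ K*} where φ_λ fixes x,y and sends z to λz. Then E is a normal subgroup of the group of graded automorphisms, T is a subgroup, E ∩ T = {id}, and every graded automorphism is a product of an element of E and an element of T (so Aut_Γ(A) ≅ E ⋊ T). -/

import Mathlib

open MvPolynomial

variable {K : Type*}

/-- `p` is homogeneous of degree `d` for the ℤ-grading of `K[x,y,z]` with
`deg x = a, deg y = b, deg z = -c`. -/
def IsWtHom [CommRing K] (a b c : ℕ) (p : MvPolynomial (Fin 3) K) (d : ℤ) : Prop :=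
  ∀ m ∈ p.support, (a : ℤ) * (m 0 : ℤ) + (b : ℤ) * (m 1 : ℤ) - (c : ℤ) * (m 2 : ℤ) = d

/-- `φ` is a graded automorphism: it maps each homogeneous component into itself. -/
def IsGradedAut [CommRing K] (a b c : ℕ)
    (φ : MvPolynomial (Fin 3) K ≃ₐ[K] MvPolynomial (Fin 3) K) : Prop :=
  ∀ (d : ℤ) (p : MvPolynomial (Fin 3) K), IsWtHom a b c p d → IsWtHom a b c (φ p) d

namespace GAux

lemma weight_eval (a b c : ℕ) (m : Fin 3 →₀ ℕ) :
    Finsupp.weight (![a, b, -c] : Fin 3 → ℤ) m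
      = (a : ℤ) * (m 0 : ℤ) + (b : ℤ) * (m 1 : ℤ) - (c : ℤ) * (m 2 : ℤ) := by
  rw [Finsupp.weight_apply, Finsupp.sum_fintype]
  · simp [Fin.sum_univ_three]; ring
  · intro i; simp

lemma isWtHom_iff [CommRing K] (a b c : ℕ) (p : MvPolynomial (Fin 3) K) (d : ℤ) :
    IsWtHom a b c p d ↔ IsWeightedHomogeneous (![a, b, -c] : Fin 3 → ℤ) p d := by
  unfold IsWtHom IsWeightedHomogeneous
  constructor
  · intro h m hm; rw [weight_eval]; exact h m (mem_support_iff.mpr hm)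
  · intro h m hm; rw [← weight_eval a b c m]; exact h (mem_support_iff.mp hm)

lemma isGradedAut_iff [CommRing K] (a b c : ℕ)
    (φ : MvPolynomial (Fin 3) K ≃ₐ[K] MvPolynomial (Fin 3) K) :
    IsGradedAut a b c φ ↔ ∀ (d : ℤ) (p : MvPolynomial (Fin 3) K),
      IsWeightedHomogeneous (![a, b, -c] : Fin 3 → ℤ) p d →
      IsWeightedHomogeneous (![a, b, -c] : Fin 3 → ℤ) (φ p) d := by
  unfold IsGradedAut
  simp_rw [isWtHom_iff]

lemma symm_graded [CommRing K] (w : Fin 3 → ℤ)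
    (φ : MvPolynomial (Fin 3) K ≃ₐ[K] MvPolynomial (Fin 3) K)
    (hφ : ∀ d p, IsWeightedHomogeneous w p d → IsWeightedHomogeneous w (φ p) d)
    (d : ℤ) (p : MvPolynomial (Fin 3) K) (hp : IsWeightedHomogeneous w p d) :
    IsWeightedHomogeneous w (φ.symm p) d := by
  classical
  set q := φ.symm p with hq
  have hfin := weightedHomogeneousComponent_finsupp (w := w) (φ := q)
  have hsum : ∑ e ∈ hfin.toFinset, weightedHomogeneousComponent w e q = q := by
    rw [← finsum_eq_sum _ hfin]; exact sum_weightedHomogeneousComponent w q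
  have hpq : p = φ q := by rw [hq, φ.apply_symm_apply]
  have key : ∀ e : ℤ, e ≠ d → weightedHomogeneousComponent w e q = 0 := by
    intro e he
    have h1 : weightedHomogeneousComponent w e p = 0 :=
      hp.weightedHomogeneousComponent_ne e he
    have h2 : weightedHomogeneousComponent w e p = φ (weightedHomogeneousComponent w e q) := by
      conv_lhs => rw [hpq, ← hsum, map_sum, map_sum]
      rw [Finset.sum_eq_single e
        (fun m _ hme => ((hφ m _ (weightedHomogeneousComponent_isWeightedHomogeneous m
          q)).weightedHomogeneousComponent_ne e (Ne.symm hme)))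
        (fun hne => by
          have h0 : weightedHomogeneousComponent w e q = 0 := by
            by_contra h; exact hne (hfin.mem_toFinset.mpr h)
          rw [h0, map_zero, map_zero])]
      exact (hφ e _ (weightedHomogeneousComponent_isWeightedHomogeneous e
        q)).weightedHomogeneousComponent_same
    have := h2 ▸ h1
    exact φ.injective (by rw [this, map_zero])
  intro m hm
  by_contra hmd
  have h0 : weightedHomogeneousComponent w (Finsupp.weight w m) q = 0 := key _ hmd
  have : coeff m (weightedHomogeneousComponent w (Finsupp.weight w m) q) = coeff m q := by
    rw [coeff_weightedHomogeneousComponent, if_pos rfl]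
  rw [h0, coeff_zero] at this
  exact hm this.symm

lemma gradedAut_symm [CommRing K] (a b c : ℕ)
    (φ : MvPolynomial (Fin 3) K ≃ₐ[K] MvPolynomial (Fin 3) K)
    (h : IsGradedAut a b c φ) : IsGradedAut a b c φ.symm :=
  (isGradedAut_iff a b c φ.symm).mpr
    (fun d p hp => symm_graded _ φ ((isGradedAut_iff a b c φ).mp h) d p hp)

lemma gradedAut_mul [CommRing K] (a b c : ℕ)
    (φ ψ : MvPolynomial (Fin 3) K ≃ₐ[K] MvPolynomial (Fin 3) K)
    (hφ : IsGradedAut a b c φ) (hψ : IsGradedAut a b c ψ) : IsGradedAut a b c (φ * ψ) :=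
  fun d p hp => hφ d _ (hψ d p hp)

lemma mv_isUnit {K : Type*} [Field K] : ∀ (n : ℕ) (p : MvPolynomial (Fin n) K),
    IsUnit p → ∃ l : K, p = C l := by
  intro n
  induction n with
  | zero => intro p _; obtain ⟨l, rfl⟩ := C_surjective (Fin 0) p; exact ⟨l, rfl⟩
  | succ n ih =>
    intro p hp
    have h1 : IsUnit (finSuccEquiv K n p) := hp.map (finSuccEquiv K n)
    obtain ⟨r, hr, hrp⟩ := Polynomial.isUnit_iff.mp h1
    obtain ⟨l, rfl⟩ := ih r hr
    refine ⟨l, ?_⟩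
    have := congrArg (finSuccEquiv K n).symm hrp
    rw [AlgEquiv.symm_apply_apply] at this
    rw [← this]
    exact RingHom.congr_fun (finSuccEquiv_comp_C_eq_C (R := K) n) l

lemma algequiv_C [CommRing K]
    (φ : MvPolynomial (Fin 3) K ≃ₐ[K] MvPolynomial (Fin 3) K) (k : K) : φ (C k) = C k := by
  rw [← algebraMap_eq]; exact φ.commutes k

variable [Field K]

lemma scale_monomial (l : K) (m : Fin 3 →₀ ℕ) (r : K) :
    aeval ![X 0, X 1, C l * X 2] (monomial m r) = monomial m (l ^ (m 2) * r) := by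
  rw [aeval_monomial, monomial_eq]
  rw [Finsupp.prod_fintype _ _ (fun i => pow_zero _),
    Finsupp.prod_fintype _ _ (fun i => pow_zero _), Fin.prod_univ_three, Fin.prod_univ_three]
  simp only [Matrix.cons_val_zero, Matrix.cons_val_one, Matrix.head_cons, Matrix.cons_val_two,
    Matrix.tail_cons, mul_pow, ← C_pow, algebraMap_eq, ← C_mul]
  rw [C_mul]; ring

/-- The automorphism `x ↦ x, y ↦ y, z ↦ l z`. -/
noncomputable def tAut (l : K) (hl : l ≠ 0) :
    MvPolynomial (Fin 3) K ≃ₐ[K] MvPolynomial (Fin 3) K :=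
  AlgEquiv.ofAlgHom (aeval ![X 0, X 1, C l * X 2]) (aeval ![X 0, X 1, C l⁻¹ * X 2])
    (by
      apply MvPolynomial.algHom_ext
      intro i
      fin_cases i <;>
        simp [← mul_assoc, ← C_mul, mul_inv_cancel₀ hl, inv_mul_cancel₀ hl])
    (by
      apply MvPolynomial.algHom_ext
      intro i
      fin_cases i <;>
        simp [← mul_assoc, ← C_mul, mul_inv_cancel₀ hl, inv_mul_cancel₀ hl])

lemma tAut_apply (l : K) (hl : l ≠ 0) (p : MvPolynomial (Fin 3) K) :
    tAut l hl p = aeval ![X 0, X 1, C l * X 2] p := rfl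

lemma tAut_inv (l : K) (hl : l ≠ 0) :
    (tAut l hl)⁻¹ = tAut l⁻¹ (inv_ne_zero hl) := AlgEquiv.ext fun _ => rfl

lemma coeff_tAut (l : K) (hl : l ≠ 0) (p : MvPolynomial (Fin 3) K) (m : Fin 3 →₀ ℕ) :
    coeff m (tAut l hl p) = l ^ (m 2) * coeff m p := by
  rw [tAut_apply]
  conv_lhs => rw [p.as_sum]
  rw [map_sum, coeff_sum]
  simp_rw [scale_monomial, coeff_monomial]
  rw [Finset.sum_eq_single m]
  · rw [if_pos rfl]
  · intro m' _ hm'; rw [if_neg hm']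
  · intro hm
    rw [if_pos rfl, notMem_support_iff.mp hm, mul_zero]

lemma tAut_graded (a b c : ℕ) (l : K) (hl : l ≠ 0) : IsGradedAut a b c (tAut l hl) := by
  intro d p hp m hm
  apply hp
  rw [mem_support_iff] at hm ⊢
  intro h
  rw [coeff_tAut, h, mul_zero] at hm
  exact hm rfl

lemma tAut_X0 (l : K) (hl : l ≠ 0) : tAut l hl (X 0) = X 0 := by
  rw [tAut_apply, aeval_X]; rfl

lemma tAut_X1 (l : K) (hl : l ≠ 0) : tAut l hl (X 1) = X 1 := by
  rw [tAut_apply, aeval_X]; rfl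

lemma tAut_X2 (l : K) (hl : l ≠ 0) : tAut l hl (X 2) = C l * X 2 := by
  rw [tAut_apply, aeval_X]; rfl

/-- A graded automorphism sends `z` to a nonzero scalar multiple of `z`. -/
lemma phi_X2 (a b c : ℕ) (ha : 0 < a) (hb : 0 < b) (hc : 0 < c)
    (φ : MvPolynomial (Fin 3) K ≃ₐ[K] MvPolynomial (Fin 3) K)
    (hφ : IsGradedAut a b c φ) : ∃ l : K, l ≠ 0 ∧ φ (X 2) = C l * X 2 := by
  have hX : IsWtHom a b c (X 2 : MvPolynomial (Fin 3) K) (-(c : ℤ)) := by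
    intro m hm
    rw [support_X, Finset.mem_singleton] at hm
    subst hm
    simp [Finsupp.single_apply]
  have dvd : ∀ (ψ : MvPolynomial (Fin 3) K ≃ₐ[K] MvPolynomial (Fin 3) K),
      IsGradedAut a b c ψ → ∃ q, ψ (X 2) = X 2 * q := by
    intro ψ hψ
    have h2 := hψ _ _ hX
    suffices h : (X 2 : MvPolynomial (Fin 3) K) ∣ ψ (X 2) by
      obtain ⟨q, hq⟩ := h; exact ⟨q, hq⟩
    conv_rhs => rw [(ψ (X 2)).as_sum]
    apply Finset.dvd_sum
    intro m hm
    rw [X_dvd_monomial]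
    right
    have heq := h2 m hm
    intro h0
    rw [h0] at heq
    have h0a : (0 : ℤ) ≤ (a : ℤ) * (m 0 : ℤ) := by positivity
    have h0b : (0 : ℤ) ≤ (b : ℤ) * (m 1 : ℤ) := by positivity
    have hcz : (0 : ℤ) < (c : ℤ) := by exact_mod_cast hc
    simp only [Nat.cast_zero, mul_zero, sub_zero] at heq
    omega
  obtain ⟨q, hq⟩ := dvd φ hφ
  obtain ⟨q', hq'⟩ := dvd φ.symm (gradedAut_symm a b c φ hφ)
  have hX2 : φ (φ.symm (X 2)) = X 2 := φ.apply_symm_apply _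
  rw [hq', map_mul, hq] at hX2
  have hu : q * φ q' = 1 := by
    apply mul_left_cancel₀ (X_ne_zero (R := K) (σ := Fin 3) 2)
    rw [mul_one, ← mul_assoc]
    exact hX2
  obtain ⟨l, rfl⟩ := mv_isUnit 3 q (IsUnit.of_mul_eq_one _ hu)
  have hl : l ≠ 0 := by
    rintro rfl
    rw [map_zero, zero_mul] at hu
    exact zero_ne_one hu
  exact ⟨l, hl, by rw [hq, mul_comm]⟩

end GAux

open GAux

/-- with `E` the graded automorphisms fixing `z` and
`T = {(x, y, λz) : λ ≠ 0}`, the set `E` is closed under multiplication, inverses and is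
normal inside the graded automorphisms, `T` is a subgroup, `E ∩ T = {1}`, and every
graded automorphism is a product of an element of `E` and an element of `T`;
i.e. `Aut_Γ(A) ≅ E ⋊ T`. -/
theorem graded_aut_semidirect [Field K] [IsAlgClosed K] [CharZero K]
    (a b c : ℕ) (ha : 0 < a) (hb : 0 < b) (hc : 0 < c) :
    let A := MvPolynomial (Fin 3) K
    let E : Set (A ≃ₐ[K] A) := {φ | IsGradedAut a b c φ ∧ φ (X 2) = X 2}
    let T : Set (A ≃ₐ[K] A) :=
      {φ | ∃ l : K, l ≠ 0 ∧ φ (X 0) = X 0 ∧ φ (X 1) = X 1 ∧ φ (X 2) = C l * X 2}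
    -- E is a subgroup
    ((1 : A ≃ₐ[K] A) ∈ E) ∧ (∀ φ ψ, φ ∈ E → ψ ∈ E → φ * ψ ∈ E) ∧ (∀ φ, φ ∈ E → φ⁻¹ ∈ E) ∧
    -- E is normal in the group of graded automorphisms
    (∀ ψ, IsGradedAut a b c ψ → ∀ φ, φ ∈ E → ψ * φ * ψ⁻¹ ∈ E) ∧
    -- T is a subgroup
    ((1 : A ≃ₐ[K] A) ∈ T) ∧ (∀ φ ψ, φ ∈ T → ψ ∈ T → φ * ψ ∈ T) ∧ (∀ φ, φ ∈ T → φ⁻¹ ∈ T) ∧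
    -- trivial intersection
    (E ∩ T = {1}) ∧
    -- every graded automorphism factors
    (∀ φ, IsGradedAut a b c φ → ∃ e ∈ E, ∃ t ∈ T, φ = e * t) := by
  intro A E T
  refine ⟨⟨fun d p hp => hp, rfl⟩, ?_, ?_, ?_, ?_, ?_, ?_, ?_, ?_⟩
  · -- E closed under mul
    rintro φ ψ ⟨hφg, hφ2⟩ ⟨hψg, hψ2⟩
    refine ⟨gradedAut_mul a b c φ ψ hφg hψg, ?_⟩
    show φ (ψ (X 2)) = X 2
    rw [hψ2, hφ2]
  · -- E closed under inv
    rintro φ ⟨hφg, hφ2⟩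
    refine ⟨gradedAut_symm a b c φ hφg, ?_⟩
    show φ.symm (X 2) = X 2
    conv_lhs => rw [← hφ2]
    exact φ.symm_apply_apply _
  · -- normality
    rintro ψ hψg φ ⟨hφg, hφ2⟩
    refine ⟨gradedAut_mul a b c _ _ (gradedAut_mul a b c ψ φ hψg hφg)
      (gradedAut_symm a b c ψ hψg), ?_⟩
    show ψ (φ (ψ.symm (X 2))) = X 2
    obtain ⟨μ, hμ, hs⟩ := phi_X2 a b c ha hb hc ψ.symm (gradedAut_symm a b c ψ hψg)
    have h1 : φ (ψ.symm (X 2)) = ψ.symm (X 2) := by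
      rw [hs, map_mul, algequiv_C, hφ2]
    rw [h1, ψ.apply_symm_apply]
  · -- 1 ∈ T
    exact ⟨1, one_ne_zero, rfl, rfl, by rw [C_1, one_mul]; rfl⟩
  · -- T closed under mul
    rintro φ ψ ⟨l, hl, hφ0, hφ1, hφ2⟩ ⟨l', hl', hψ0, hψ1, hψ2⟩
    refine ⟨l * l', mul_ne_zero hl hl', ?_, ?_, ?_⟩
    · show φ (ψ (X 0)) = X 0; rw [hψ0, hφ0]
    · show φ (ψ (X 1)) = X 1; rw [hψ1, hφ1]
    · show φ (ψ (X 2)) = C (l * l') * X 2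
      rw [hψ2, map_mul, algequiv_C, hφ2, C_mul]; ring
  · -- T closed under inv
    rintro φ ⟨l, hl, hφ0, hφ1, hφ2⟩
    refine ⟨l⁻¹, inv_ne_zero hl, ?_, ?_, ?_⟩
    · show φ.symm (X 0) = X 0
      conv_lhs => rw [← hφ0]
      exact φ.symm_apply_apply _
    · show φ.symm (X 1) = X 1
      conv_lhs => rw [← hφ1]
      exact φ.symm_apply_apply _
    · show φ.symm (X 2) = C l⁻¹ * X 2
      apply φ.injective
      rw [φ.apply_symm_apply, map_mul, algequiv_C, hφ2, ← mul_assoc, ← C_mul,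
        inv_mul_cancel₀ hl, C_1, one_mul]
  · -- E ∩ T = {1}
    ext φ
    constructor
    · rintro ⟨⟨hφg, hφ2⟩, l, hl, hφ0, hφ1, _⟩
      have key : φ.toAlgHom = AlgHom.id K A := by
        apply MvPolynomial.algHom_ext
        intro i
        fin_cases i
        · exact hφ0
        · exact hφ1
        · exact hφ2
      show φ = 1
      apply AlgEquiv.ext
      intro p
      have := DFunLike.congr_fun key p
      simpa using this
    · intro h
      rw [Set.mem_singleton_iff] at h
      subst h
      exact ⟨⟨fun d p hp => hp, rfl⟩, 1, one_ne_zero, rfl, rfl, by rw [C_1, one_mul]; rfl⟩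
  · -- factorization
    intro φ hφg
    obtain ⟨l, hl, hφ2⟩ := phi_X2 a b c ha hb hc φ hφg
    refine ⟨φ * (tAut l hl)⁻¹, ⟨?_, ?_⟩, tAut l hl,
      ⟨l, hl, tAut_X0 l hl, tAut_X1 l hl, tAut_X2 l hl⟩, (inv_mul_cancel_right φ _).symm⟩
    · exact gradedAut_mul a b c φ _ hφg
        (by rw [tAut_inv]; exact tAut_graded a b c l⁻¹ (inv_ne_zero hl))
    · show φ ((tAut l hl)⁻¹ (X 2)) = X 2
      rw [tAut_inv, tAut_X2, map_mul, algequiv_C, hφ2, ← mul_assoc, ← C_mul,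
        inv_mul_cancel₀ hl, C_1, one_mul]
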